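/- For n a positive integer, the sum over all (n,n)-Dyck words p of n/a(p) equals (n/(2n)) * C(2n, n) = (1/2) * C(2n, n), where a(p) counts the returns of p to the diagonal (vertices (j,j) with j > 0). -/

import Mathlib

/-- Rotation of a word by `k` (moves the first `k` letters to the end). -/
def rotNat (N k : ℕ) (w : Fin N → Bool) : Fin N → Bool :=
  fun i => w ⟨(i.val + k) % N, Nat.mod_lt _ i.pos⟩

/-- A binary word of type `(m,n)`: length `m+n` with exactly `m` `true`s (up-steps). -/
def IsWord (m n : ℕ) (w : Fin (m + n) → Bool) : Prop :=
  (Finset.univ.filter (fun i => w i = true)).card = m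

instance (m n : ℕ) : DecidablePred (IsWord m n) := fun _ => by
  unfold IsWord; infer_instance

/-- Number of up-steps among the first `t` steps of the word `w`. -/
def ups (N : ℕ) (w : Fin N → Bool) (t : ℕ) : ℕ :=
  (Finset.univ.filter (fun i : Fin N => i.val < t ∧ w i = true)).card

/-- Number of right-steps among the first `t` steps of the word `w`. -/
def rights (N : ℕ) (w : Fin N → Bool) (t : ℕ) : ℕ :=
  (Finset.univ.filter (fun i : Fin N => i.val < t ∧ w i = false)).card

/-- An `(m,n)`-Dyck word: `m` up-steps (`true`) and `n` right-steps (`false`) such that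
every prefix with `i` ups and `j` rights satisfies `m * j ≤ n * i`
(the path stays weakly above the diagonal `m·x = n·y`). -/
def IsDyck (m n : ℕ) (w : Fin (m + n) → Bool) : Prop :=
  IsWord m n w ∧ ∀ t ≤ m + n, m * rights (m + n) w t ≤ n * ups (m + n) w t

instance (m n : ℕ) : DecidablePred (IsDyck m n) := fun _ => by
  unfold IsDyck; infer_instance

/-- The anchors of `w` away from the origin: the indices `1 ≤ t ≤ m+n` such that the vertex
`(j, i) = (rights w t, ups w t)` reached after `t` steps lies on the diagonal `m·x = n·y`. -/
def anchors (m n : ℕ) (w : Fin (m + n) → Bool) : Finset ℕ :=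
  (Finset.Icc 1 (m + n)).filter
    (fun t => m * rights (m + n) w t = n * ups (m + n) w t)

namespace SqAnch

open Finset

/-- Height of the path after `t` steps. -/
def ht (N : ℕ) (w : Fin N → Bool) (t : ℕ) : ℤ :=
  (ups N w t : ℤ) - (rights N w t : ℤ)

lemma count_succ (N : ℕ) (w : Fin N → Bool) (b : Bool) (t : ℕ) (h : t < N) :
    (Finset.univ.filter (fun i : Fin N => i.val < t + 1 ∧ w i = b)).card
      = (Finset.univ.filter (fun i : Fin N => i.val < t ∧ w i = b)).card
        + (if w ⟨t, h⟩ = b then 1 else 0) := by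
  by_cases hw : w ⟨t, h⟩ = b
  · rw [if_pos hw]
    have hset : (Finset.univ.filter (fun i : Fin N => i.val < t + 1 ∧ w i = b))
        = insert ⟨t, h⟩ (Finset.univ.filter (fun i : Fin N => i.val < t ∧ w i = b)) := by
      ext i
      simp only [Finset.mem_insert, Finset.mem_filter, Finset.mem_univ, true_and]
      constructor
      · rintro ⟨hi, hb⟩
        rcases Nat.lt_succ_iff_lt_or_eq.mp hi with h' | h'
        · exact Or.inr ⟨h', hb⟩
        · exact Or.inl (Fin.ext h')
      · rintro (rfl | ⟨hi, hb⟩)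
        · exact ⟨Nat.lt_succ_self t, hw⟩
        · exact ⟨Nat.lt_succ_of_lt hi, hb⟩
    rw [hset, Finset.card_insert_of_notMem (by simp)]
  · rw [if_neg hw, Nat.add_zero]
    have hset : (Finset.univ.filter (fun i : Fin N => i.val < t + 1 ∧ w i = b))
        = (Finset.univ.filter (fun i : Fin N => i.val < t ∧ w i = b)) := by
      ext i
      simp only [Finset.mem_filter, Finset.mem_univ, true_and]
      constructor
      · rintro ⟨hi, hb⟩
        rcases Nat.lt_succ_iff_lt_or_eq.mp hi with h' | h'
        · exact ⟨h', hb⟩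
        · exact absurd hb (by rw [show i = ⟨t, h⟩ from Fin.ext h']; exact hw)
      · rintro ⟨hi, hb⟩
        exact ⟨Nat.lt_succ_of_lt hi, hb⟩
    simp only [hset, Nat.add_zero]

lemma ups_succ (N : ℕ) (w : Fin N → Bool) (t : ℕ) (h : t < N) :
    ups N w (t + 1) = ups N w t + (if w ⟨t, h⟩ = true then 1 else 0) :=
  count_succ N w true t h

lemma rights_succ (N : ℕ) (w : Fin N → Bool) (t : ℕ) (h : t < N) :
    rights N w (t + 1) = rights N w t + (if w ⟨t, h⟩ = false then 1 else 0) :=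
  count_succ N w false t h

lemma ups_zero (N : ℕ) (w : Fin N → Bool) : ups N w 0 = 0 := by
  simp [ups]

lemma rights_zero (N : ℕ) (w : Fin N → Bool) : rights N w 0 = 0 := by
  simp [rights]

lemma ht_zero (N : ℕ) (w : Fin N → Bool) : ht N w 0 = 0 := by
  simp [ht, ups_zero, rights_zero]

lemma ht_succ (N : ℕ) (w : Fin N → Bool) (t : ℕ) (h : t < N) :
    ht N w (t + 1) = ht N w t + (if w ⟨t, h⟩ = true then 1 else -1) := by
  unfold ht
  rw [ups_succ N w t h, rights_succ N w t h]
  cases hw : w ⟨t, h⟩ <;> simp [hw] <;> ring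

lemma ups_add_rights (N : ℕ) (w : Fin N → Bool) :
    ∀ t, t ≤ N → ups N w t + rights N w t = t := by
  intro t
  induction t with
  | zero => intro _; simp [ups_zero, rights_zero]
  | succ t ih =>
    intro hle
    have h : t < N := hle
    rw [ups_succ N w t h, rights_succ N w t h]
    have := ih (Nat.le_of_lt h)
    cases hw : w ⟨t, h⟩ <;> simp [hw] <;> omega

lemma ups_total (N : ℕ) (w : Fin N → Bool) :
    ups N w N = (Finset.univ.filter (fun i => w i = true)).card := by
  unfold ups
  congr 1
  ext i
  simp [i.isLt]

lemma ups_word {n : ℕ} {w : Fin (n + n) → Bool} (hw : IsWord n n w) :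
    ups (n + n) w (n + n) = n := by
  rw [ups_total]; exact hw

lemma rights_word {n : ℕ} {w : Fin (n + n) → Bool} (hw : IsWord n n w) :
    rights (n + n) w (n + n) = n := by
  have := ups_add_rights (n + n) w (n + n) le_rfl
  rw [ups_word hw] at this
  omega

lemma ht_word {n : ℕ} {w : Fin (n + n) → Bool} (hw : IsWord n n w) :
    ht (n + n) w (n + n) = 0 := by
  simp [ht, ups_word hw, rights_word hw]

/-- Dyck characterization via heights. -/
lemma isDyck_iff {n : ℕ} (hn : 0 < n) (w : Fin (n + n) → Bool) :
    IsDyck n n w ↔ IsWord n n w ∧ ∀ t ≤ n + n, 0 ≤ ht (n + n) w t := by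
  unfold IsDyck
  refine and_congr_right fun _ => ?_
  refine forall_congr' fun t => forall_congr' fun _ => ?_
  have h1 : n * rights (n + n) w t ≤ n * ups (n + n) w t ↔
      rights (n + n) w t ≤ ups (n + n) w t :=
    ⟨fun h => Nat.le_of_mul_le_mul_left h hn, fun h => Nat.mul_le_mul_left _ h⟩
  rw [h1]
  unfold ht
  omega

lemma anchor_iff {n : ℕ} (hn : 0 < n) (w : Fin (n + n) → Bool) (t : ℕ) :
    (n * rights (n + n) w t = n * ups (n + n) w t) ↔ ht (n + n) w t = 0 := by
  have h1 : n * rights (n + n) w t = n * ups (n + n) w t ↔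
      rights (n + n) w t = ups (n + n) w t :=
    ⟨fun h => Nat.eq_of_mul_eq_mul_left hn h, fun h => by rw [h]⟩
  rw [h1]
  unfold ht
  omega

/-! ### Rotation lemmas -/

lemma rotNat_rotNat (N j k : ℕ) (w : Fin N → Bool) :
    rotNat N k (rotNat N j w) = rotNat N (k + j) w := by
  funext i
  unfold rotNat
  congr 1
  apply Fin.ext
  show ((i.val + k) % N + j) % N = (i.val + (k + j)) % N
  rw [Nat.mod_add_mod, Nat.add_assoc]

lemma rotNat_mod (N k : ℕ) (w : Fin N → Bool) :
    rotNat N k w = rotNat N (k % N) w := by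
  funext i
  unfold rotNat
  congr 1
  apply Fin.ext
  show (i.val + k) % N = (i.val + k % N) % N
  conv_rhs => rw [Nat.add_mod, Nat.mod_mod_of_dvd _ dvd_rfl]
  rw [← Nat.add_mod]

lemma rotNat_self (N : ℕ) (w : Fin N → Bool) : rotNat N N w = w := by
  funext i
  unfold rotNat
  have : (i.val + N) % N = i.val := by
    rw [Nat.add_mod_right]; exact Nat.mod_eq_of_lt i.isLt
  exact congrArg w (Fin.ext this)

lemma rotNat_zero (N : ℕ) (w : Fin N → Bool) : rotNat N 0 w = w := by
  funext i
  unfold rotNat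
  exact congrArg w (Fin.ext (by simp [Nat.mod_eq_of_lt i.isLt]))

/-- Key: height of rotated word. -/
lemma ht_rot (N : ℕ) (w : Fin N → Bool) (hb : ht N w N = 0) (k : ℕ) (hk : k < N) :
    ∀ t, t ≤ N → ht N (rotNat N k w) t = ht N w ((k + t) % N) - ht N w k := by
  have hN : 0 < N := lt_of_le_of_lt (Nat.zero_le k) hk
  intro t
  induction t with
  | zero =>
    intro _
    rw [Nat.add_zero, Nat.mod_eq_of_lt hk, ht_zero, sub_self]
  | succ t ih =>
    intro hle
    have htN : t < N := hle
    rw [ht_succ N (rotNat N k w) t htN, ih (Nat.le_of_lt htN)]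
    have hstep : (rotNat N k w) ⟨t, htN⟩ = w ⟨(t + k) % N, Nat.mod_lt _ hN⟩ := rfl
    set r := (k + t) % N with hr
    have hrN : r < N := Nat.mod_lt _ hN
    have hcomm : (t + k) % N = r := by rw [hr, Nat.add_comm]
    have hmod : (k + (t + 1)) % N = (r + 1) % N := by
      rw [hr, Nat.mod_add_mod, ← Nat.add_assoc]
    rw [hmod]
    rcases Nat.lt_or_ge (r + 1) N with h1 | h1
    · rw [Nat.mod_eq_of_lt h1]
      rw [ht_succ N w r hrN]
      rw [hstep]
      have : (⟨(t + k) % N, Nat.mod_lt _ hN⟩ : Fin N) = ⟨r, hrN⟩ := Fin.ext hcomm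
      rw [this]
      ring
    · have hrN1 : r + 1 = N := by omega
      have : (r + 1) % N = 0 := by rw [hrN1, Nat.mod_self]
      rw [this, ht_zero]
      have h2 := ht_succ N w r hrN
      rw [hrN1, hb] at h2
      rw [hstep]
      have : (⟨(t + k) % N, Nat.mod_lt _ hN⟩ : Fin N) = ⟨r, hrN⟩ := Fin.ext hcomm
      rw [this]
      linarith [h2]

lemma count_rot (N k : ℕ) (hk : k < N) (w : Fin N → Bool) (b : Bool) :
    (Finset.univ.filter (fun i : Fin N => rotNat N k w i = b)).card
      = (Finset.univ.filter (fun i : Fin N => w i = b)).card := by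
  have hN : 0 < N := lt_of_le_of_lt (Nat.zero_le k) hk
  apply Finset.card_nbij' (i := fun i : Fin N => (⟨(i.val + k) % N, Nat.mod_lt _ hN⟩ : Fin N))
    (j := fun j : Fin N => (⟨(j.val + (N - k)) % N, Nat.mod_lt _ hN⟩ : Fin N))
  · intro a ha
    simp only [Finset.mem_coe, Finset.mem_filter, Finset.mem_univ, true_and] at ha ⊢
    exact ha
  · intro a ha
    simp only [Finset.mem_coe, Finset.mem_filter, Finset.mem_univ, true_and] at ha ⊢
    show w ⟨((a.val + (N - k)) % N + k) % N, _⟩ = b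
    have : ((a.val + (N - k)) % N + k) % N = a.val := by
      rw [Nat.mod_add_mod]
      have h2 : a.val + (N - k) + k = a.val + N := by omega
      rw [h2, Nat.add_mod_right, Nat.mod_eq_of_lt a.isLt]
    convert ha using 3
  · intro a _
    apply Fin.ext
    show ((a.val + k) % N + (N - k)) % N = a.val
    rw [Nat.mod_add_mod]
    have h2 : a.val + k + (N - k) = a.val + N := by omega
    rw [h2, Nat.add_mod_right, Nat.mod_eq_of_lt a.isLt]
  · intro a _
    apply Fin.ext
    show ((a.val + (N - k)) % N + k) % N = a.val
    rw [Nat.mod_add_mod]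
    have h2 : a.val + (N - k) + k = a.val + N := by omega
    rw [h2, Nat.add_mod_right, Nat.mod_eq_of_lt a.isLt]

/-- Rotation preserves the word property. -/
lemma isWord_rot {n : ℕ} (hn : 0 < n) (k : ℕ) {w : Fin (n + n) → Bool} (hw : IsWord n n w) :
    IsWord n n (rotNat (n + n) k w) := by
  have hN : 0 < n + n := by omega
  unfold IsWord at *
  rw [rotNat_mod]
  exact (count_rot (n + n) (k % (n + n)) (Nat.mod_lt _ hN) w true).trans hw

/-- Dyck criterion for rotations of a balanced word. -/
lemma isDyck_rot_iff {n : ℕ} (hn : 0 < n) {w : Fin (n + n) → Bool} (hw : IsWord n n w)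
    (k : ℕ) (hk : k < n + n) :
    IsDyck n n (rotNat (n + n) k w) ↔
      ∀ s < n + n, ht (n + n) w k ≤ ht (n + n) w s := by
  have hN : 0 < n + n := by omega
  have hb := ht_word hw
  rw [isDyck_iff hn]
  constructor
  · rintro ⟨-, h⟩ s hs
    set t := if k ≤ s then s - k else s + (n + n) - k with htdef
    have ht' : t ≤ n + n := by rw [htdef]; split <;> omega
    have hmod : (k + t) % (n + n) = s := by
      rw [htdef]
      split
      · rw [show k + (s - k) = s by omega, Nat.mod_eq_of_lt hs]
      · rw [show k + (s + (n + n) - k) = s + (n + n) by omega,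
          Nat.add_mod_right, Nat.mod_eq_of_lt hs]
    have h2 := h t ht'
    rw [ht_rot _ w hb k hk t ht', hmod] at h2
    linarith
  · intro h
    refine ⟨isWord_rot hn k hw, ?_⟩
    intro t htle
    rw [ht_rot _ w hb k hk t htle]
    have h2 := h ((k + t) % (n + n)) (Nat.mod_lt _ hN)
    linarith

lemma isDyck_rot_iff_ht_zero {n : ℕ} (hn : 0 < n) {p : Fin (n + n) → Bool}
    (hp : IsDyck n n p) (k : ℕ) (hk : k < n + n) :
    IsDyck n n (rotNat (n + n) k p) ↔ ht (n + n) p k = 0 := by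
  have hpos : ∀ t ≤ n + n, 0 ≤ ht (n + n) p t := ((isDyck_iff hn p).mp hp).2
  rw [isDyck_rot_iff hn hp.1 k hk]
  constructor
  · intro h
    have h1 := h 0 (by omega)
    rw [ht_zero] at h1
    have h2 := hpos k (Nat.le_of_lt hk)
    omega
  · intro h s hs
    rw [h]
    exact hpos s (Nat.le_of_lt hs)

lemma anchors_card {n : ℕ} (hn : 0 < n) {p : Fin (n + n) → Bool} (hw : IsWord n n p) :
    (anchors n n p).card
      = ((Finset.range (n + n)).filter (fun k => ht (n + n) p k = 0)).card := by
  have hN : 0 < n + n := by omega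
  have ha : anchors n n p = (Finset.Icc 1 (n + n)).filter (fun t => ht (n + n) p t = 0) := by
    unfold anchors
    apply Finset.filter_congr
    intro t _
    exact anchor_iff hn p t
  have h1 : Finset.Icc 1 (n + n) = insert (n + n) (Finset.Ico 1 (n + n)) := by
    ext t
    simp only [Finset.mem_Icc, Finset.mem_insert, Finset.mem_Ico]
    omega
  have h2 : Finset.range (n + n) = insert 0 (Finset.Ico 1 (n + n)) := by
    ext t
    simp only [Finset.mem_range, Finset.mem_insert, Finset.mem_Ico]
    omega
  rw [ha, h1, h2, Finset.filter_insert, Finset.filter_insert,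
    if_pos (ht_word hw), if_pos (ht_zero _ p),
    Finset.card_insert_of_notMem (by simp),
    Finset.card_insert_of_notMem (by simp)]

/-- Number of Dyck rotations is invariant under rotation. -/
lemma dk_card_rot {n : ℕ} (j : ℕ) (hj : j ≤ n + n) (w : Fin (n + n) → Bool) :
    ((Finset.range (n + n)).filter
        (fun k => IsDyck n n (rotNat (n + n) k (rotNat (n + n) j w)))).card
      = ((Finset.range (n + n)).filter (fun k => IsDyck n n (rotNat (n + n) k w))).card := by
  rcases Nat.eq_or_lt_of_le hj with rfl | hj
  · rw [rotNat_self]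
  · have hN : 0 < n + n := lt_of_le_of_lt (Nat.zero_le j) hj
    apply Finset.card_nbij' (i := fun k => (k + j) % (n + n))
      (j := fun k => (k + ((n + n) - j)) % (n + n))
    · intro k hk
      simp only [Finset.mem_coe, Finset.mem_filter, Finset.mem_range] at hk ⊢
      refine ⟨Nat.mod_lt _ hN, ?_⟩
      have he : rotNat (n + n) ((k + j) % (n + n)) w
          = rotNat (n + n) k (rotNat (n + n) j w) := by
        rw [← rotNat_mod, ← rotNat_rotNat]
      rw [he]
      exact hk.2
    · intro k hk
      simp only [Finset.mem_coe, Finset.mem_filter, Finset.mem_range] at hk ⊢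
      refine ⟨Nat.mod_lt _ hN, ?_⟩
      have he : rotNat (n + n) ((k + ((n + n) - j)) % (n + n)) (rotNat (n + n) j w)
          = rotNat (n + n) k w := by
        rw [← rotNat_mod, rotNat_rotNat,
          show (k + ((n + n) - j) + j) = k + (n + n) by omega,
          rotNat_mod, Nat.add_mod_right, Nat.mod_eq_of_lt hk.1]
      rw [he]
      exact hk.2
    · intro k hk
      simp only [Finset.mem_coe, Finset.mem_filter, Finset.mem_range] at hk
      dsimp only
      rw [Nat.mod_add_mod, show k + j + ((n + n) - j) = k + (n + n) by omega,
        Nat.add_mod_right, Nat.mod_eq_of_lt hk.1]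
    · intro k hk
      simp only [Finset.mem_coe, Finset.mem_filter, Finset.mem_range] at hk
      dsimp only
      rw [Nat.mod_add_mod, show k + ((n + n) - j) + j = k + (n + n) by omega,
        Nat.add_mod_right, Nat.mod_eq_of_lt hk.1]

/-- The number of `(n,n)` words is the central binomial coefficient. -/
lemma card_words (n : ℕ) :
    (Finset.univ.filter (IsWord n n)).card = (n + n).choose n := by
  classical
  have h : ((Finset.univ : Finset (Fin (n + n))).powersetCard n).card = (n + n).choose n := by
    rw [Finset.card_powersetCard, Finset.card_univ, Fintype.card_fin]
  rw [← h]
  apply Finset.card_nbij' (i := fun w => Finset.univ.filter (fun i => w i = true))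
    (j := fun s => fun i => decide (i ∈ s))
  · intro w hw
    simp only [Finset.mem_coe, Finset.mem_filter, Finset.mem_univ, true_and] at hw
    rw [Finset.mem_coe, Finset.mem_powersetCard]
    exact ⟨Finset.subset_univ _, hw⟩
  · intro s hs
    rw [Finset.mem_coe, Finset.mem_powersetCard] at hs
    simp only [Finset.mem_coe, Finset.mem_filter, Finset.mem_univ, true_and]
    unfold IsWord
    have he : (Finset.univ.filter (fun i : Fin (n + n) => decide (i ∈ s) = true)) = s := by
      ext i; simp
    rw [he]
    exact hs.2
  · intro w _
    funext i
    simp only [Finset.mem_filter, Finset.mem_univ, true_and]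
    cases h : w i <;> simp [h]
  · intro s _
    ext i
    simp

theorem main (n : ℕ) (hn : 0 < n) :
    ∑ w ∈ Finset.univ.filter (IsDyck n n),
        ((n : ℚ) / (anchors n n w).card)
      = (1 / 2) * Nat.choose (n + n) n := by
  classical
  have hN : 0 < n + n := by omega
  set W : Finset (Fin (n + n) → Bool) := Finset.univ.filter (IsWord n n) with hWdef
  set Dk : (Fin (n + n) → Bool) → Finset ℕ :=
    fun w => (Finset.range (n + n)).filter (fun k => IsDyck n n (rotNat (n + n) k w)) with hDk
  -- nonemptiness
  have f1 : ∀ w ∈ W, (Dk w).Nonempty := by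
    intro w hw
    rw [hWdef, Finset.mem_filter] at hw
    obtain ⟨k0, hk0, hmin⟩ := Finset.exists_min_image (Finset.range (n + n))
      (fun k => ht (n + n) w k) ⟨0, Finset.mem_range.mpr hN⟩
    refine ⟨k0, ?_⟩
    rw [hDk, Finset.mem_filter]
    refine ⟨hk0, ?_⟩
    rw [isDyck_rot_iff hn hw.2 k0 (Finset.mem_range.mp hk0)]
    intro s hs
    exact hmin s (Finset.mem_range.mpr hs)
  -- Dk card for Dyck words equals anchors card
  have f3 : ∀ p, IsDyck n n p → (Dk p).card = (anchors n n p).card := by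
    intro p hp
    rw [anchors_card hn hp.1, hDk]
    congr 1
    apply Finset.filter_congr
    intro k hk
    exact isDyck_rot_iff_ht_zero hn hp k (Finset.mem_range.mp hk)
  -- main chain
  have key : ((n + n).choose n : ℚ)
      = (n + n) * ∑ p ∈ Finset.univ.filter (IsDyck n n), (1 : ℚ) / (anchors n n p).card := by
    have step1 : ((n + n).choose n : ℚ) = ∑ w ∈ W, (1 : ℚ) := by
      rw [Finset.sum_const, nsmul_eq_mul, mul_one, hWdef, card_words]
    have step2 : ∀ w ∈ W, (1 : ℚ)
        = ∑ k ∈ Finset.range (n + n),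
            (if IsDyck n n (rotNat (n + n) k w) then (1 : ℚ) / (Dk w).card else 0) := by
      intro w hw
      rw [← Finset.sum_filter]
      rw [show (Finset.range (n + n)).filter (fun k => IsDyck n n (rotNat (n + n) k w)) = Dk w
        from rfl]
      rw [Finset.sum_const, nsmul_eq_mul]
      have hne : ((Dk w).card : ℚ) ≠ 0 := by
        have h0 : (Dk w).card ≠ 0 := Finset.card_ne_zero_of_mem (f1 w hw).choose_spec
        exact_mod_cast h0
      field_simp
    have step3 : ((n + n).choose n : ℚ)
        = ∑ k ∈ Finset.range (n + n), ∑ w ∈ W,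
            (if IsDyck n n (rotNat (n + n) k w) then (1 : ℚ) / (Dk w).card else 0) := by
      rw [step1, Finset.sum_congr rfl step2, Finset.sum_comm]
    have step4 : ∀ k ∈ Finset.range (n + n),
        (∑ w ∈ W, (if IsDyck n n (rotNat (n + n) k w) then (1 : ℚ) / (Dk w).card else 0))
          = ∑ p ∈ W, (if IsDyck n n p then (1 : ℚ) / (Dk p).card else 0) := by
      intro k hk
      have hkN : k < n + n := Finset.mem_range.mp hk
      apply Finset.sum_nbij' (i := fun w => rotNat (n + n) k w)
        (j := fun p => rotNat (n + n) ((n + n) - k) p)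
      · intro w hw
        rw [hWdef, Finset.mem_filter] at hw ⊢
        exact ⟨Finset.mem_univ _, isWord_rot hn k hw.2⟩
      · intro p hp
        rw [hWdef, Finset.mem_filter] at hp ⊢
        exact ⟨Finset.mem_univ _, isWord_rot hn _ hp.2⟩
      · intro w _
        rw [rotNat_rotNat, show (n + n) - k + k = n + n by omega, rotNat_self]
      · intro p _
        rw [rotNat_rotNat, show k + ((n + n) - k) = n + n by omega, rotNat_self]
      · intro w _
        have hcard : (Dk (rotNat (n + n) k w)).card = (Dk w).card := by
          simp only [hDk]
          exact dk_card_rot k (Nat.le_of_lt hkN) w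
        rw [hcard]
    have step5 : ((n + n).choose n : ℚ)
        = (n + n) * ∑ p ∈ W, (if IsDyck n n p then (1 : ℚ) / (Dk p).card else 0) := by
      rw [step3, Finset.sum_congr rfl step4, Finset.sum_const, Finset.card_range,
        nsmul_eq_mul]
      push_cast
      ring
    have step6 : (∑ p ∈ W, (if IsDyck n n p then (1 : ℚ) / (Dk p).card else 0))
        = ∑ p ∈ Finset.univ.filter (IsDyck n n), (1 : ℚ) / (anchors n n p).card := by
      rw [← Finset.sum_filter]
      have hWD : W.filter (IsDyck n n) = Finset.univ.filter (IsDyck n n) := by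
        ext p
        simp only [hWdef, Finset.mem_filter, Finset.mem_univ, true_and, and_iff_right_iff_imp]
        exact fun h => h.1
      rw [hWD]
      apply Finset.sum_congr rfl
      intro p hp
      rw [f3 p (Finset.mem_filter.mp hp).2]
    rw [step5, step6]
  -- conclude
  have hSum : ∑ p ∈ Finset.univ.filter (IsDyck n n), (1 : ℚ) / (anchors n n p).card
      = ((n + n).choose n : ℚ) / (n + n) := by
    rw [key]
    have hne : ((n : ℚ) + n) ≠ 0 := by
      have : (0 : ℚ) < (n : ℚ) := by exact_mod_cast hn
      linarith
    rw [mul_div_cancel_left₀ _ hne]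
  calc ∑ w ∈ Finset.univ.filter (IsDyck n n), ((n : ℚ) / (anchors n n w).card)
      = ∑ w ∈ Finset.univ.filter (IsDyck n n),
          (n : ℚ) * ((1 : ℚ) / (anchors n n w).card) := by
        apply Finset.sum_congr rfl
        intro w _
        rw [div_eq_mul_one_div]
    _ = (n : ℚ) * (((n + n).choose n : ℚ) / (n + n)) := by
        rw [← Finset.mul_sum, hSum]
    _ = (1 / 2) * Nat.choose (n + n) n := by
        have hne : ((n : ℚ) + n) ≠ 0 := by
          have : (0 : ℚ) < (n : ℚ) := by exact_mod_cast hn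
          linarith
        field_simp
        ring

end SqAnch

/-- Square case of Theorem 1: for positive `n`, the sum over all `(n,n)`-Dyck words `p`
of `n/a(p)` equals `(n/(2n)) * C(2n,n) = (1/2) * C(2n, n)`, where `a(p)` counts the
returns of `p` to the diagonal. -/
theorem square_anchored_sum (n : ℕ) (hn : 0 < n) :
    ∑ w ∈ Finset.univ.filter (IsDyck n n),
        ((n : ℚ) / (anchors n n w).card)
      = (1 / 2) * Nat.choose (n + n) n := SqAnch.main n hn
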